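/- arXiv:2103.11038 — 3 statements merged into one kernel-verified Lean document; each statement's English description precedes it below -/
import Mathlib

section
/- Let X have a strictly decreasing pdf f on (a,∞) with f(x)=0 elsewhere. Then f(X) is uniformly distributed on (0,1) if and only if f(x) = e^{a-x} for x ∈ (a,∞). -/
open Set MeasureTheory Real Filter Topology

lemma ode_aux (b : ℝ) (f : ℝ → ℝ) (hmeas : Measurable f)
    (hint : IntegrableOn f (Set.Ioi b))
    (hcont : ∀ x ∈ Set.Ioi b, ContinuousAt f x)
    (hT : ∀ x ∈ Set.Ioi b, (∫ t in Set.Ioi x, f t) = f x) :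
    ∀ x ∈ Set.Ioi b, ∀ y ∈ Set.Ioi b, f y * Real.exp y = f x * Real.exp x := by
  have hsplit : ∀ u v : ℝ, b < u → u ≤ v →
      (∫ t in Set.Ioi u, f t) = (∫ t in Set.Ioc u v, f t) + ∫ t in Set.Ioi v, f t := by
    intro u v hu huv
    rw [← setIntegral_union (Set.Ioc_disjoint_Ioi le_rfl) measurableSet_Ioi
      (hint.mono_set fun t ht => hu.trans ht.1) (hint.mono_set (Set.Ioi_subset_Ioi (hu.le.trans huv))),
      Set.Ioc_union_Ioi_eq_Ioi huv]
  set c := b + 1 with hc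
  have hcb : b < c := by simp [hc]
  set G : ℝ → ℝ := fun x => (∫ t in Set.Ioi c, f t) - ∫ t in c..x, f t with hGdef
  have hTG : ∀ x ∈ Set.Ioi b, (∫ t in Set.Ioi x, f t) = G x := by
    intro x hx
    rcases le_total c x with h | h
    · have h1 := hsplit c x hcb h
      have h2 : (∫ t in c..x, f t) = ∫ t in Set.Ioc c x, f t :=
        intervalIntegral.integral_of_le h
      simp only [hGdef]
      rw [h2]; linarith
    · have h1 := hsplit x c hx h
      have h2 : (∫ t in c..x, f t) = -∫ t in Set.Ioc x c, f t := by
        rw [intervalIntegral.integral_symm, intervalIntegral.integral_of_le h]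
      simp only [hGdef]
      rw [h2]; linarith
  have hG : ∀ x ∈ Set.Ioi b, HasDerivAt G (-(f x)) x := by
    intro x hx
    have hii : IntervalIntegrable f volume c x := by
      apply IntegrableOn.intervalIntegrable
      apply hint.mono_set
      intro t ht
      have := ht.1
      simp only [Set.mem_Ioi]
      rcases le_total c x with h | h
      · have : min c x = c := min_eq_left h
        calc b < c := hcb
        _ ≤ t := by have := ht.1; rw [Set.uIcc_of_le h] at ht; exact ht.1
      · rw [Set.uIcc_of_ge h] at ht; exact lt_of_lt_of_le hx ht.1
    have := (intervalIntegral.integral_hasDerivAt_right hii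
      (hmeas.stronglyMeasurable.stronglyMeasurableAtFilter) (hcont x hx)).const_sub
      (∫ t in Set.Ioi c, f t)
    exact this
  have hH : ∀ x ∈ Set.Ioi b, HasDerivAt (fun u => G u * Real.exp u) 0 x := by
    intro x hx
    have h1 := (hG x hx).mul (Real.hasDerivAt_exp x)
    have h2 : G x = f x := by rw [← hTG x hx, hT x hx]
    rw [h2] at h1
    rw [show (0:ℝ) = -f x * Real.exp x + f x * Real.exp x by ring]; exact h1
  have hconst : ∀ x ∈ Set.Ioi b, ∀ y ∈ Set.Ioi b, x ≤ y →
      G y * Real.exp y = G x * Real.exp x := by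
    intro x hx y hy hxy
    have := constant_of_has_deriv_right_zero (f := fun u => G u * Real.exp u)
      (a := x) (b := y)
      (fun t ht => ((hH t (lt_of_lt_of_le hx ht.1)).continuousAt).continuousWithinAt)
      (fun t ht => (hH t (lt_of_lt_of_le hx ht.1)).hasDerivWithinAt)
    exact this y (Set.right_mem_Icc.2 hxy)
  intro x hx y hy
  have e1 : f y * Real.exp y = G y * Real.exp y := by rw [← hTG y hy, hT y hy]
  have e2 : f x * Real.exp x = G x * Real.exp x := by rw [← hTG x hx, hT x hx]
  rw [e1, e2]
  rcases le_total x y with h | h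
  · exact hconst x hx y hy h
  · exact (hconst y hy x hx h).symm

/-- Characterization: if `X` has a continuous strictly decreasing pdf `f` on `(a,∞)` with
`f = 0` elsewhere, then `f(X)` is uniformly distributed on `(0,1)` (i.e. `P(f(X) ≤ y) = y`
for all `y ∈ (0,1)`) if and only if `f(x) = e^{a-x}` for all `x ∈ (a,∞)`. -/
theorem stmt_6 (a : ℝ) (f : ℝ → ℝ)
    (hf0 : ∀ x, x ∉ Set.Ioi a → f x = 0)
    (hfpos : ∀ x ∈ Set.Ioi a, 0 < f x)
    (hcont : ContinuousOn f (Set.Ioi a))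
    (hanti : StrictAntiOn f (Set.Ioi a))
    (hmeas : Measurable f)
    (μ : Measure ℝ)
    (hμ : μ = MeasureTheory.volume.withDensity (fun x => ENNReal.ofReal (f x)))
    (hprob : IsProbabilityMeasure μ) :
    (∀ y ∈ Set.Ioo (0:ℝ) 1, μ {x | f x ≤ y} = ENNReal.ofReal y)
      ↔ (∀ x ∈ Set.Ioi a, f x = Real.exp (a - x)) := by
  -- nonnegativity
  have hnn : ∀ x, 0 ≤ f x := by
    intro x
    by_cases hx : x ∈ Set.Ioi a
    · exact (hfpos x hx).le
    · rw [hf0 x hx]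
  -- total lintegral is 1
  have h1 : ∫⁻ x, ENNReal.ofReal (f x) = 1 := by
    have := hprob.measure_univ
    rw [hμ, withDensity_apply _ MeasurableSet.univ, Measure.restrict_univ] at this
    exact this
  -- integrability
  have hInt : Integrable f := by
    refine ⟨hmeas.aestronglyMeasurable, ?_⟩
    rw [hasFiniteIntegral_iff_ofReal (Filter.Eventually.of_forall hnn), h1]
    exact ENNReal.one_lt_top
  -- μ of Iic a is zero
  have hμIic : μ (Set.Iic a) = 0 := by
    rw [hμ, withDensity_apply _ measurableSet_Iic]
    have h0 : ∀ x ∈ Set.Iic a, ENNReal.ofReal (f x) = (0:ENNReal) := by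
      intro x hx
      rw [hf0 x (by simp only [Set.mem_Ioi, not_lt]; exact hx)]
      simp
    rw [setLIntegral_congr_fun measurableSet_Iic h0]
    simp
  have hunion : ∀ c : ℝ, μ (Set.Iic a ∪ Set.Ici c) = μ (Set.Ici c) := by
    intro c
    refine le_antisymm ((measure_union_le _ _).trans ?_) (measure_mono Set.subset_union_right)
    rw [hμIic, zero_add]
  -- μ (Ici x) as a real integral
  have hIci : ∀ x : ℝ, μ (Set.Ici x) = ENNReal.ofReal (∫ t in Set.Ioi x, f t) := by
    intro x
    rw [hμ, withDensity_apply _ measurableSet_Ici,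
      setLIntegral_congr (Filter.EventuallyEq.symm Ioi_ae_eq_Ici),
      ← ofReal_integral_eq_lintegral_ofReal hInt.integrableOn
        (Filter.Eventually.of_forall hnn)]
  -- total real integral over Ioi a is 1
  have hres : ∫⁻ x in Set.Ioi a, ENNReal.ofReal (f x) = 1 := by
    rw [← lintegral_indicator measurableSet_Ioi, ← h1]
    congr 1
    funext x
    by_cases hx : x ∈ Set.Ioi a
    · rw [Set.indicator_of_mem hx]
    · rw [Set.indicator_of_notMem hx, hf0 x hx]; simp
  have hTot : ∫ t in Set.Ioi a, f t = 1 := by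
    have : ENNReal.ofReal (∫ t in Set.Ioi a, f t) = 1 := by
      rw [ofReal_integral_eq_lintegral_ofReal hInt.integrableOn
        (Filter.Eventually.of_forall hnn), hres]
    exact ENNReal.ofReal_eq_one.mp this
  constructor
  · -- forward direction
    intro hy x hx
    -- key identity
    have key : ∀ x, a < x → f x < 1 → (∫ t in Set.Ioi x, f t) = f x := by
      intro x hax hfx1
      have h2 := hy (f x) ⟨hfpos x hax, hfx1⟩
      have hsetEq : {u | f u ≤ f x} = Set.Iic a ∪ Set.Ici x := by
        ext u
        simp only [Set.mem_setOf_eq, Set.mem_union, Set.mem_Iic, Set.mem_Ici]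
        constructor
        · intro h
          by_cases hu : a < u
          · right
            by_contra hxu
            push_neg at hxu
            exact absurd h (not_le.2 (hanti hu hax hxu))
          · left; exact le_of_not_gt hu
        · rintro (h | h)
          · rw [hf0 u (by simpa using not_lt.2 h)]
            exact (hfpos x hax).le
          · rcases eq_or_lt_of_le h with rfl | h
            · exact le_rfl
            · exact (hanti hax (hax.trans h) h).le
      rw [hsetEq] at h2
      rw [hunion x, hIci x] at h2
      have hT0 : 0 ≤ ∫ t in Set.Ioi x, f t :=
        setIntegral_nonneg measurableSet_Ioi fun t _ => hnn t
      exact (ENNReal.ofReal_eq_ofReal_iff hT0 (hfpos x hax).le).mp h2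
    -- there exists a point where f < 1
    have hx1 : ∃ z, a < z ∧ f z < 1 := by
      by_contra h
      push_neg at h
      have hconst : ∫ t in Set.Ioc a (a+2), (1:ℝ) = 2 := by
        simp [Real.volume_Ioc]
      have h2 : (2:ℝ) ≤ ∫ t in Set.Ioc a (a+2), f t := by
        have hmono := setIntegral_mono_on (f := fun _ => (1:ℝ)) (g := f) (s := Set.Ioc a (a+2))
          (integrableOn_const (by rw [Real.volume_Ioc]; exact ENNReal.ofReal_ne_top))
          hInt.integrableOn measurableSet_Ioc (fun t ht => h t ht.1)
        rwa [hconst] at hmono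
      have h3 : (∫ t in Set.Ioc a (a+2), f t) ≤ ∫ t in Set.Ioi a, f t :=
        setIntegral_mono_set hInt.integrableOn (Filter.Eventually.of_forall hnn)
          (Set.Ioc_subset_Ioi_self).eventuallyLE
      rw [hTot] at h3
      linarith
    set S : Set ℝ := {z | a < z ∧ f z < 1} with hSdef
    have hSne : S.Nonempty := hx1
    have hSbd : BddBelow S := ⟨a, fun z hz => hz.1.le⟩
    set b := sInf S with hbdef
    have hab : a ≤ b := le_csInf hSne fun z hz => hz.1.le
    have hS' : ∀ z, b < z → a < z ∧ f z < 1 := by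
      intro z hbz
      obtain ⟨s, hs, hsz⟩ := exists_lt_of_csInf_lt hSne hbz
      have haz : a < z := hs.1.trans hsz
      exact ⟨haz, (hanti hs.1 haz hsz).trans hs.2⟩
    have hode := ode_aux b f hmeas (hInt.integrableOn)
      (fun z hz => hcont.continuousAt (isOpen_Ioi.mem_nhds (lt_of_le_of_lt hab hz)))
      (fun z hz => key z (hS' z hz).1 (hS' z hz).2)
    set K := f (b+1) * Real.exp (b+1) with hKdef
    have hfK : ∀ z, b < z → f z = K * Real.exp (-z) := by
      intro z hz
      have h := hode (b+1) (by simp) z hz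
      have hez := Real.exp_ne_zero z
      rw [Real.exp_neg, hKdef, ← h, mul_assoc, mul_inv_cancel₀ hez, mul_one]
    have hTb : ∀ z, b ≤ z → (∫ t in Set.Ioi z, f t) = K * Real.exp (-z) := by
      intro z hz
      have hcg : (∫ t in Set.Ioi z, f t) = ∫ t in Set.Ioi z, K * Real.exp (-t) :=
        setIntegral_congr_fun measurableSet_Ioi fun t ht => hfK t (lt_of_le_of_lt hz ht)
      rw [hcg, integral_const_mul, integral_exp_neg_Ioi]
    have hba : b = a := by
      by_contra hne
      have hlt : a < b := lt_of_le_of_ne hab (Ne.symm hne)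
      have hcb : ContinuousAt f b := hcont.continuousAt (isOpen_Ioi.mem_nhds hlt)
      have hge : ∀ z ∈ Set.Ioo a b, 1 ≤ f z := by
        intro z hz
        by_contra h
        push_neg at h
        exact absurd (csInf_le hSbd ⟨hz.1, h⟩) (not_le.2 hz.2)
      have hfb1 : 1 ≤ f b := by
        have hne2 : (nhdsWithin b (Set.Ioo a b)).NeBot := by
          refine mem_closure_iff_nhdsWithin_neBot.mp ?_
          rw [closure_Ioo hlt.ne]
          exact Set.right_mem_Icc.2 hlt.le
        refine ge_of_tendsto ((hcb.continuousWithinAt (s := Set.Ioo a b)).tendsto) ?_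
        filter_upwards [self_mem_nhdsWithin] with z hz using hge z hz
      have hfbK : f b = K * Real.exp (-b) := by
        have ht1 : Filter.Tendsto f (nhdsWithin b (Set.Ioi b)) (𝓝 (f b)) :=
          (hcb.continuousWithinAt (s := Set.Ioi b)).tendsto
        have ht2 : Filter.Tendsto (fun z => K * Real.exp (-z)) (nhdsWithin b (Set.Ioi b))
            (𝓝 (K * Real.exp (-b))) :=
          ((continuous_const.mul (Real.continuous_exp.comp continuous_neg)).tendsto b).mono_left nhdsWithin_le_nhds
        have heq : f =ᶠ[nhdsWithin b (Set.Ioi b)] fun z => K * Real.exp (-z) := by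
          filter_upwards [self_mem_nhdsWithin] with z hz using hfK z hz
        exact tendsto_nhds_unique (ht1.congr' heq) ht2
      have hIoc : b - a ≤ ∫ t in Set.Ioc a b, f t := by
        have hconst : ∫ t in Set.Ioc a b, (1:ℝ) = b - a := by
          simp [Real.volume_Ioc, hlt.le]
        rw [← hconst]
        refine setIntegral_mono_on ?_ hInt.integrableOn measurableSet_Ioc ?_
        · refine integrableOn_const ?_
          rw [Real.volume_Ioc]
          exact ENNReal.ofReal_ne_top
        · intro z hz
          rcases eq_or_lt_of_le hz.2 with rfl | h
          · exact hfb1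
          · exact hge z ⟨hz.1, h⟩
      have hsplitTot : (∫ t in Set.Ioc a b, f t) + ∫ t in Set.Ioi b, f t = 1 := by
        rw [← hTot, ← setIntegral_union (Set.Ioc_disjoint_Ioi le_rfl) measurableSet_Ioi
          hInt.integrableOn hInt.integrableOn, Set.Ioc_union_Ioi_eq_Ioi hlt.le]
      have h5 : (1:ℝ) ≤ ∫ t in Set.Ioi b, f t := by
        rw [hTb b le_rfl, ← hfbK]
        exact hfb1
      linarith
    have hK : K = Real.exp a := by
      have h6 := hTb a (le_of_eq hba)
      rw [hTot, Real.exp_neg] at h6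
      have hea := Real.exp_ne_zero a
      field_simp at h6
      linarith
    rw [hfK x (hba ▸ hx), hK, ← Real.exp_add]
    ring_nf
  · -- backward direction
    intro hexp y hy
    set c := a - Real.log y with hcdef
    have hlogy : Real.log y < 0 := Real.log_neg hy.1 hy.2
    have hac : a < c := by simp only [hcdef]; linarith
    have hsetEq : {x | f x ≤ y} = Set.Iic a ∪ Set.Ici c := by
      ext x
      simp only [Set.mem_setOf_eq, Set.mem_union, Set.mem_Iic, Set.mem_Ici]
      by_cases hx : a < x
      · rw [hexp x hx]
        constructor
        · intro h
          right
          have := Real.exp_le_exp.mp (by rwa [Real.exp_log hy.1] : Real.exp (a - x) ≤ Real.exp (Real.log y))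
          simp only [hcdef]; linarith
        · intro h
          rcases h with h | h
          · linarith
          · have h2 : Real.exp (a - x) ≤ Real.exp (Real.log y) := by
              apply Real.exp_le_exp.mpr
              simp only [hcdef] at h
              linarith
            rwa [Real.exp_log hy.1] at h2
      · constructor
        · intro _; left; exact le_of_not_gt hx
        · intro _; rw [hf0 x hx]; exact hy.1.le
    rw [hsetEq]
    rw [hunion c, hIci c]
    congr 1
    calc (∫ t in Set.Ioi c, f t) = ∫ t in Set.Ioi c, Real.exp a * Real.exp (-t) := by
          apply setIntegral_congr_fun measurableSet_Ioi
          intro t ht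
          rw [hexp t (hac.trans ht)]
          show Real.exp (a - t) = Real.exp a * Real.exp (-t)
          rw [← Real.exp_add]
          ring_nf
      _ = Real.exp a * ∫ t in Set.Ioi c, Real.exp (-t) := by rw [integral_const_mul]
      _ = Real.exp a * Real.exp (-c) := by rw [integral_exp_neg_Ioi]
      _ = y := by
          rw [← Real.exp_add]
          have hac2 : a + -c = Real.log y := by simp only [hcdef]; ring
          rw [hac2, Real.exp_log hy.1]
end

section
/- If X has strictly decreasing pdf f with cdf F, then K(y)=1-p if and only if y = f(F^{-1}(p)), where K is the cdf of f(X), for 0<p<1. -/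
open Set MeasureTheory
open scoped ENNReal

/-- Right-continuous inverse (quantile function) `F⁻¹(u) = sup {x : F x ≤ u}`. -/
noncomputable def uquantile (F : ℝ → ℝ) (u : ℝ) : ℝ := sSup {x : ℝ | F x ≤ u}

/-- If `X` has support `(0,b)` and strictly decreasing pdf `f` with cdf `F`, then for
`p ∈ (0,1)` and `y` in the positive range of `f`:
`K(y) = 1 - p` if and only if `y = f(F⁻¹(p))`, where `K(y) = P(f(X) ≤ y)`. -/
theorem stmt_12 (b p y : ℝ) (f : ℝ → ℝ) (hb : 0 < b)
    (hf0 : ∀ x, x ∉ Set.Ioo 0 b → f x = 0)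
    (hfpos : ∀ x ∈ Set.Ioo 0 b, 0 < f x)
    (hcont : ContinuousOn f (Set.Ioo 0 b))
    (hanti : StrictAntiOn f (Set.Ioo 0 b))
    (hmeas : Measurable f)
    (μ : Measure ℝ)
    (hμ : μ = MeasureTheory.volume.withDensity (fun x => ENNReal.ofReal (f x)))
    (hprob : IsProbabilityMeasure μ)
    (hp : p ∈ Set.Ioo (0:ℝ) 1)
    (hIm : ∃ x ∈ Set.Ioo 0 b, f x = y) :
    (μ {x | f x ≤ y}).toReal = 1 - p
      ↔ y = f (uquantile (fun x => (μ (Set.Iic x)).toReal) p) := by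
  obtain ⟨x0, hx0, hyx⟩ := hIm
  obtain ⟨hp0, hp1⟩ := hp
  set F : ℝ → ℝ := fun x => (μ (Set.Iic x)).toReal with hF
  have hfin : ∀ s : Set ℝ, μ s ≠ ⊤ := fun s => measure_ne_top μ s
  -- μ vanishes on sets where f = 0
  have hzero : ∀ x : ℝ, x ≤ 0 → μ (Set.Iic x) = 0 := by
    intro x hx
    rw [hμ, withDensity_apply _ measurableSet_Iic]
    have hae : ∀ᵐ t ∂(volume : Measure ℝ), t ∈ Set.Iic x → ENNReal.ofReal (f t) = (0 : ℝ≥0∞) := by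
      refine ae_of_all _ (fun t ht => ?_)
      have hft : f t = 0 := hf0 t (by simp only [Set.mem_Ioo, not_and, not_lt]; intro h; linarith [Set.mem_Iic.1 ht])
      simp [hft]
    rw [setLIntegral_congr_fun_ae measurableSet_Iic hae]
    simp
  have hone : ∀ x : ℝ, b ≤ x → μ (Set.Iic x) = 1 := by
    intro x hx
    have hIoi : μ (Set.Ioi x) = 0 := by
      rw [hμ, withDensity_apply _ measurableSet_Ioi]
      have hae : ∀ᵐ t ∂(volume : Measure ℝ), t ∈ Set.Ioi x → ENNReal.ofReal (f t) = (0 : ℝ≥0∞) := by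
        refine ae_of_all _ (fun t ht => ?_)
        have hft : f t = 0 := hf0 t (by simp only [Set.mem_Ioo, not_and, not_lt]; intro h; linarith [Set.mem_Ioi.1 ht])
        simp [hft]
      rw [setLIntegral_congr_fun_ae measurableSet_Ioi hae]
      simp
    have := measure_add_measure_compl (μ := μ) (measurableSet_Iic (a := x))
    rw [Set.compl_Iic, hIoi, add_zero, measure_univ] at this
    exact this
  have hF0 : ∀ x : ℝ, x ≤ 0 → F x = 0 := fun x hx => by simp [hF, hzero x hx]
  have hF1 : ∀ x : ℝ, b ≤ x → F x = 1 := fun x hx => by simp [hF, hone x hx]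
  have hFmono : Monotone F := fun a a' h =>
    ENNReal.toReal_mono (hfin _) (measure_mono (Set.Iic_subset_Iic.2 h))
  have hatom : ∀ a : ℝ, μ {a} = 0 := fun a => by
    rw [hμ]; exact withDensity_absolutelyContinuous volume _ (Real.volume_singleton)
  -- positivity of μ on subintervals of (0,b)
  have hposIoo : ∀ u v : ℝ, 0 ≤ u → u < v → v ≤ b → 0 < μ (Set.Ioo u v) := by
    intro u v hu huv hvb
    set c : ℝ := (u + v) / 2 with hc
    have huc : u < c := by simp [hc]; linarith
    have hcv : c < v := by simp [hc]; linarith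
    have hcmem : c ∈ Set.Ioo 0 b := ⟨by linarith, by linarith⟩
    have hfc : 0 < f c := hfpos c hcmem
    have hsub : Set.Ioo u c ⊆ Set.Ioo u v := Set.Ioo_subset_Ioo le_rfl hcv.le
    have hlb : ENNReal.ofReal (f c) * volume (Set.Ioo u c) ≤ μ (Set.Ioo u c) := by
      rw [hμ, withDensity_apply _ measurableSet_Ioo, ← setLIntegral_const]
      refine setLIntegral_mono' measurableSet_Ioo (fun t ht => ?_)
      have htmem : t ∈ Set.Ioo 0 b := ⟨by linarith [ht.1], by linarith [ht.2]⟩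
      exact ENNReal.ofReal_le_ofReal (hanti htmem hcmem ht.2).le
    have hvol : (0 : ℝ≥0∞) < volume (Set.Ioo u c) := by
      rw [Real.volume_Ioo]; exact ENNReal.ofReal_pos.2 (by linarith)
    have : (0 : ℝ≥0∞) < ENNReal.ofReal (f c) * volume (Set.Ioo u c) := by
      exact ENNReal.mul_pos (by simp [ENNReal.ofReal_pos, hfc]) hvol.ne'
    exact lt_of_lt_of_le this (hlb.trans (measure_mono hsub))
  -- F is strictly monotone on [0,b]
  have hStrict : ∀ u v : ℝ, 0 ≤ u → u < v → v ≤ b → F u < F v := by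
    intro u v hu huv hvb
    have hsplit : Set.Iic u ∪ Set.Ioc u v = Set.Iic v := Set.Iic_union_Ioc_eq_Iic huv.le
    have hdisj : Disjoint (Set.Iic u) (Set.Ioc u v) := by
      refine Set.disjoint_left.2 (fun t (ht : t ≤ u) ht2 => absurd ht2.1 (not_lt.2 ht))
    have hadd : μ (Set.Iic v) = μ (Set.Iic u) + μ (Set.Ioc u v) := by
      rw [← hsplit, measure_union hdisj measurableSet_Ioc]
    have hpos : 0 < μ (Set.Ioc u v) :=
      lt_of_lt_of_le (hposIoo u v hu huv hvb) (measure_mono Set.Ioo_subset_Ioc_self)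
    have : F v = F u + (μ (Set.Ioc u v)).toReal := by
      simp only [hF, hadd, ENNReal.toReal_add (hfin _) (hfin _)]
    rw [this]
    have := ENNReal.toReal_pos hpos.ne' (hfin _)
    linarith
  -- the quantile point
  set S : Set ℝ := {x | F x ≤ p} with hS
  set xp : ℝ := sSup S with hxp
  have hS0 : (0:ℝ) ∈ S := by simp [hS, hF0 0 le_rfl, hp0.le]
  have hSne : S.Nonempty := ⟨0, hS0⟩
  have hSbdd : BddAbove S := by
    refine ⟨b, fun x hx => ?_⟩
    by_contra h
    push_neg at h
    have : F x = 1 := hF1 x h.le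
    simp [hS, this] at hx
    linarith
  have hSdc : ∀ x s : ℝ, s ∈ S → x ≤ s → x ∈ S := fun x s hs hxs =>
    le_trans (hFmono hxs) hs
  have hIioS : Set.Iio xp ⊆ S := by
    intro x hx
    obtain ⟨s, hsS, hxs⟩ := exists_lt_of_lt_csSup hSne hx
    exact hSdc x s hsS hxs.le
  -- F xp = p
  have hμIio : μ (Set.Iio xp) ≤ ENNReal.ofReal p := by
    have hun : Set.Iio xp = ⋃ n : ℕ, Set.Iic (xp - ((n:ℝ)+1)⁻¹) := by
      ext x
      simp only [Set.mem_Iio, Set.mem_iUnion, Set.mem_Iic]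
      constructor
      · intro hx
        obtain ⟨n, hn⟩ := exists_nat_one_div_lt (show (0:ℝ) < xp - x by linarith)
        exact ⟨n, by rw [one_div] at hn; linarith⟩
      · rintro ⟨n, hn⟩
        have : (0:ℝ) < ((n:ℝ)+1)⁻¹ := by positivity
        linarith
    have hmon : Monotone (fun n : ℕ => Set.Iic (xp - ((n:ℝ)+1)⁻¹)) := by
      intro m n hmn
      refine Set.Iic_subset_Iic.2 ?_
      have : ((n:ℝ)+1)⁻¹ ≤ ((m:ℝ)+1)⁻¹ := by
        apply inv_anti₀ (by positivity)
        exact_mod_cast Nat.succ_le_succ hmn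
      linarith
    rw [hun, hmon.measure_iUnion]
    refine iSup_le (fun n => ?_)
    have hxS : xp - ((n:ℝ)+1)⁻¹ ∈ S := hIioS (by
      simp only [Set.mem_Iio]
      have : (0:ℝ) < ((n:ℝ)+1)⁻¹ := by positivity
      linarith)
    exact (ENNReal.le_ofReal_iff_toReal_le (hfin _) hp0.le).2 hxS
  have hle : μ (Set.Iic xp) ≤ ENNReal.ofReal p := by
    calc μ (Set.Iic xp) = μ (Set.Iio xp ∪ {xp}) := by rw [Set.Iio_union_right]
    _ ≤ μ (Set.Iio xp) + μ {xp} := measure_union_le _ _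
    _ = μ (Set.Iio xp) := by rw [hatom, add_zero]
    _ ≤ ENNReal.ofReal p := hμIio
  have hge : ENNReal.ofReal p ≤ μ (Set.Iic xp) := by
    have hin : Set.Iic xp = ⋂ n : ℕ, Set.Iic (xp + ((n:ℝ)+1)⁻¹) := by
      ext x
      simp only [Set.mem_Iic, Set.mem_iInter]
      constructor
      · intro hx n
        have : (0:ℝ) < ((n:ℝ)+1)⁻¹ := by positivity
        linarith
      · intro h
        by_contra hc
        push_neg at hc
        obtain ⟨n, hn⟩ := exists_nat_one_div_lt (show (0:ℝ) < x - xp by linarith)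
        rw [one_div] at hn
        linarith [h n]
    have hant : Antitone (fun n : ℕ => Set.Iic (xp + ((n:ℝ)+1)⁻¹)) := by
      intro m n hmn
      refine Set.Iic_subset_Iic.2 ?_
      have : ((n:ℝ)+1)⁻¹ ≤ ((m:ℝ)+1)⁻¹ := by
        apply inv_anti₀ (by positivity)
        exact_mod_cast Nat.succ_le_succ hmn
      linarith
    rw [hin, hant.measure_iInter (fun n => measurableSet_Iic.nullMeasurableSet)
      ⟨0, hfin _⟩]
    refine le_iInf (fun n => ?_)
    have hnot : xp + ((n:ℝ)+1)⁻¹ ∉ S := by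
      intro hmem
      have hle' := le_csSup hSbdd hmem
      have : (0:ℝ) < ((n:ℝ)+1)⁻¹ := by positivity
      rw [← hxp] at hle'
      linarith
    have : p < F (xp + ((n:ℝ)+1)⁻¹) := by
      by_contra h
      exact hnot (le_of_not_gt h)
    calc ENNReal.ofReal p ≤ ENNReal.ofReal (F (xp + ((n:ℝ)+1)⁻¹)) :=
      ENNReal.ofReal_le_ofReal this.le
    _ = μ (Set.Iic (xp + ((n:ℝ)+1)⁻¹)) := ENNReal.ofReal_toReal (hfin _)
  have hFxp : F xp = p := by
    have : μ (Set.Iic xp) = ENNReal.ofReal p := le_antisymm hle hge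
    simp [hF, this, ENNReal.toReal_ofReal hp0.le]
  have hxp0 : 0 < xp := by
    by_contra h
    push_neg at h
    have := hF0 xp h
    rw [hFxp] at this
    linarith
  have hxpb : xp < b := by
    by_contra h
    push_neg at h
    have := hF1 xp h
    rw [hFxp] at this
    linarith
  have hxpmem : xp ∈ Set.Ioo 0 b := ⟨hxp0, hxpb⟩
  -- the distribution of f(X)
  have hy : 0 < y := hyx ▸ hfpos x0 hx0
  have hcompl : {x : ℝ | f x ≤ y}ᶜ = Set.Ioo 0 x0 := by
    ext x
    simp only [Set.mem_compl_iff, Set.mem_setOf_eq, not_le, Set.mem_Ioo]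
    constructor
    · intro hx
      have hxmem : x ∈ Set.Ioo 0 b := by
        by_contra h
        rw [hf0 x h] at hx
        linarith
      refine ⟨hxmem.1, ?_⟩
      by_contra h
      push_neg at h
      rcases eq_or_lt_of_le h with heq | hlt
      · rw [← heq, hyx] at hx; linarith
      · have := hanti hx0 hxmem hlt
        rw [hyx] at this
        linarith
    · rintro ⟨h1, h2⟩
      have hxmem : x ∈ Set.Ioo 0 b := ⟨h1, by linarith [hx0.2]⟩
      rw [← hyx]
      exact hanti hxmem hx0 h2
  have hAmeas : MeasurableSet {x : ℝ | f x ≤ y} := hmeas measurableSet_Iic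
  have hIooIic : μ (Set.Ioo 0 x0) = μ (Set.Iic x0) := by
    refine le_antisymm (measure_mono (fun t ht => ht.2.le)) ?_
    have hsub : Set.Iic x0 ⊆ Set.Iic 0 ∪ Set.Ioo 0 x0 ∪ {x0} := by
      intro t (ht : t ≤ x0)
      rcases le_or_gt t 0 with h | h
      · exact Or.inl (Or.inl h)
      · rcases eq_or_lt_of_le ht with heq | hlt
        · exact Or.inr heq
        · exact Or.inl (Or.inr ⟨h, hlt⟩)
    calc μ (Set.Iic x0) ≤ μ (Set.Iic 0 ∪ Set.Ioo 0 x0 ∪ {x0}) := measure_mono hsub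
    _ ≤ μ (Set.Iic 0 ∪ Set.Ioo 0 x0) + μ {x0} := measure_union_le _ _
    _ ≤ μ (Set.Iic 0) + μ (Set.Ioo 0 x0) + μ {x0} :=
        add_le_add_left (measure_union_le _ _) _
    _ = μ (Set.Ioo 0 x0) := by rw [hzero 0 le_rfl, hatom, zero_add, add_zero]
  have hK : (μ {x : ℝ | f x ≤ y}).toReal = 1 - F x0 := by
    have := measure_add_measure_compl (μ := μ) hAmeas
    rw [hcompl, measure_univ, hIooIic] at this
    have h2 : (μ {x : ℝ | f x ≤ y}).toReal + F x0 = 1 := by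
      have := congrArg ENNReal.toReal this
      rwa [ENNReal.toReal_add (hfin _) (hfin _), ENNReal.toReal_one] at this
    linarith
  -- final equivalence
  have hquant : uquantile F p = xp := rfl
  rw [hK, hquant]
  constructor
  · intro h
    have hFx0 : F x0 = p := by linarith
    have hx0xp : x0 = xp := by
      rcases lt_trichotomy x0 xp with hlt | heq | hgt
      · have := hStrict x0 xp hx0.1.le hlt hxpb.le
        rw [hFx0, hFxp] at this; linarith
      · exact heq
      · have := hStrict xp x0 hxp0.le hgt hx0.2.le
        rw [hFx0, hFxp] at this; linarith
    rw [← hyx, hx0xp]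
  · intro h
    have hfeq : f x0 = f xp := by rw [hyx, h]
    have hx0xp : x0 = xp := hanti.injOn hx0 hxpmem hfeq
    have : F x0 = p := by rw [hx0xp, hFxp]
    linarith
end

section
/- Let X and Y be absolutely continuous with cdfs F and G. If φ(x):=G^{-1}(F(x)), then Y =_st φ(X) and φ satisfies φ(x_2)-φ(x_1) ≥ x_2 - x_1 whenever x_1 ≤ x_2 if and only if X ≤_disp Y. -/
open Set MeasureTheory Filter Topology
open scoped ENNReal

lemma uq_comp {F : ℝ → ℝ} (hFm : StrictMono F) (x : ℝ) : uquantile F (F x) = x := by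
  have h : {y : ℝ | F y ≤ F x} = Iic x := by
    ext y; simpa using hFm.le_iff_le
  rw [uquantile, h, csSup_Iic]

section
variable {μ : Measure ℝ} [IsProbabilityMeasure μ] {F : ℝ → ℝ}

lemma cdf_pos (hF : F = fun x => (μ (Set.Iic x)).toReal) (hFm : StrictMono F) (x : ℝ) :
    0 < F x := by
  have h0 : 0 ≤ F (x - 1) := by rw [hF]; positivity
  have := hFm (show x - 1 < x by linarith)
  linarith

lemma cdf_lt_one (hF : F = fun x => (μ (Set.Iic x)).toReal) (hFm : StrictMono F) (x : ℝ) :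
    F x < 1 := by
  have h1 : F (x + 1) ≤ 1 := by
    rw [hF]
    calc (μ (Iic (x + 1))).toReal ≤ (1 : ℝ≥0∞).toReal :=
          ENNReal.toReal_mono ENNReal.one_ne_top prob_le_one
      _ = 1 := by simp
  have := hFm (show x < x + 1 by linarith)
  linarith

lemma cdf_surj (hF : F = fun x => (μ (Set.Iic x)).toReal) (hFc : Continuous F)
    (hFm : StrictMono F) {u : ℝ} (h0 : 0 < u) (h1 : u < 1) : ∃ x, F x = u := by
  have hbot : Tendsto F atBot (𝓝 0) := by
    have hmono : Monotone (fun x : ℝ => Iic x) := fun a b hab => Iic_subset_Iic.2 hab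
    have hmeas : ∀ x : ℝ, NullMeasurableSet (Iic x) μ :=
      fun x => measurableSet_Iic.nullMeasurableSet
    have hfin : ∃ x : ℝ, μ (Iic x) ≠ ∞ := ⟨0, measure_ne_top μ _⟩
    have h := tendsto_measure_iInter_atBot hmeas hmono hfin
    have hempty : (⋂ x : ℝ, Iic x) = (∅ : Set ℝ) := by
      ext y; simp only [mem_iInter, mem_Iic, mem_empty_iff_false, iff_false, not_forall, not_le]
      exact ⟨y - 1, by linarith⟩
    rw [hempty, measure_empty] at h
    have := (ENNReal.tendsto_toReal (by simp)).comp h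
    simpa [hF, Function.comp_def] using this
  have htop : Tendsto F atTop (𝓝 1) := by
    have h := tendsto_measure_Iic_atTop (μ := μ)
    have := (ENNReal.tendsto_toReal (measure_ne_top μ univ)).comp h
    simp only [measure_univ, ENNReal.toReal_one] at this
    simpa [hF, Function.comp_def] using this
  obtain ⟨a, ha⟩ := (hbot.eventually_lt_const h0).exists
  obtain ⟨b, hb⟩ := (htop.eventually_const_lt h1).exists
  have hab : a ≤ b := (hFm.lt_iff_lt.mp (by linarith)).le
  obtain ⟨x, _, hx⟩ := intermediate_value_Icc hab hFc.continuousOn ⟨ha.le, hb.le⟩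
  exact ⟨x, hx⟩

lemma uq_cdf (hF : F = fun x => (μ (Set.Iic x)).toReal) (hFc : Continuous F)
    (hFm : StrictMono F) {u : ℝ} (h0 : 0 < u) (h1 : u < 1) : F (uquantile F u) = u := by
  obtain ⟨x, hx⟩ := cdf_surj hF hFc hFm h0 h1
  rw [← hx, uq_comp hFm]

end

/-- Mapping of quantiles: for continuous random variables `X ∼ μ` and `Y ∼ ν` with cdfs
`F` and `G`, the mapping function `φ(x) = G⁻¹(F(x))` satisfies `Y =_st φ(X)`, and `φ`
is expansive (`φ(x₂) - φ(x₁) ≥ x₂ - x₁` whenever `x₁ ≤ x₂`) if and only if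
`X ≤_disp Y`, i.e. `F⁻¹(β) - F⁻¹(α) ≤ G⁻¹(β) - G⁻¹(α)` for all `0 < α ≤ β < 1`. -/
theorem stmt_13 (μ ν : Measure ℝ) [IsProbabilityMeasure μ] [IsProbabilityMeasure ν]
    (F G : ℝ → ℝ)
    (hF : F = fun x => (μ (Set.Iic x)).toReal)
    (hG : G = fun x => (ν (Set.Iic x)).toReal)
    (hFc : Continuous F) (hGc : Continuous G)
    (hFm : StrictMono F) (hGm : StrictMono G) :
    ν = μ.map (fun x => uquantile G (F x)) ∧
    ((∀ x₁ x₂ : ℝ, x₁ ≤ x₂ →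
        x₂ - x₁ ≤ uquantile G (F x₂) - uquantile G (F x₁))
      ↔ (∀ α β : ℝ, 0 < α → α ≤ β → β < 1 →
          uquantile F β - uquantile F α ≤ uquantile G β - uquantile G α)) := by
  set φ : ℝ → ℝ := fun x => uquantile G (F x) with hφ
  have hGφ : ∀ x, G (φ x) = F x := fun x =>
    uq_cdf hG hGc hGm (cdf_pos hF hFm x) (cdf_lt_one hF hFm x)
  have hφmono : Monotone φ := by
    intro a b hab
    exact hGm.le_iff_le.mp (by rw [hGφ, hGφ]; exact hFm.monotone hab)
  constructor
  · refine Measure.ext_of_Iic ν (μ.map φ) fun a => ?_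
    rw [Measure.map_apply hφmono.measurable measurableSet_Iic]
    set x₀ := uquantile F (G a) with hx₀
    have hFx₀ : F x₀ = G a :=
      uq_cdf hF hFc hFm (cdf_pos hG hGm a) (cdf_lt_one hG hGm a)
    have hpre : φ ⁻¹' Iic a = Iic x₀ := by
      ext x
      simp only [mem_preimage, mem_Iic]
      rw [← hGm.le_iff_le, hGφ, ← hFx₀, hFm.le_iff_le]
    rw [hpre]
    have hto : (ν (Iic a)).toReal = (μ (Iic x₀)).toReal := by
      have h1 : G a = (ν (Iic a)).toReal := by rw [hG]
      have h2 : F x₀ = (μ (Iic x₀)).toReal := by rw [hF]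
      rw [← h1, ← h2, hFx₀]
    exact (ENNReal.toReal_eq_toReal_iff' (measure_ne_top ν _) (measure_ne_top μ _)).mp hto
  · constructor
    · intro h α β hα hαβ hβ
      have hFα : F (uquantile F α) = α :=
        uq_cdf hF hFc hFm hα (lt_of_le_of_lt hαβ hβ)
      have hFβ : F (uquantile F β) = β :=
        uq_cdf hF hFc hFm (lt_of_lt_of_le hα hαβ) hβ
      have hle : uquantile F α ≤ uquantile F β :=
        hFm.le_iff_le.mp (by rw [hFα, hFβ]; exact hαβ)
      have := h _ _ hle
      rwa [hFα, hFβ] at this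
    · intro h x₁ x₂ hx
      have := h (F x₁) (F x₂) (cdf_pos hF hFm x₁) (hFm.monotone hx) (cdf_lt_one hF hFm x₂)
      rwa [uq_comp hFm, uq_comp hFm] at this
end
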